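/- Let d be an odd prime and ρ a bipartite density supported in M. For a = (a1,a2), m = (m1,m2) ∈ Z_d × Z_d define C(a,m) by d² C(a,m) = Σ_{k=1}^{d−1} Σ_{n1,n2 ∈ Z_d} η^{−(k(k−1)/2)(a1+a2) − k(m1+m2) − k(a1 n1 + a2 n2)} ρ_{n1 n2, (n1+k)(n2+k)}. Then every C(a,m) is a real number and ρ − ρ_D = Σ_{a1,a2 ∈ Z_d} Σ_{m1,m2 ∈ Z_d} C(a,m) · P_{a1,1}(m1) ⊗ P_{a2,1}(m2), where each P_{a,1}(m) is a rank-one projection. -/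

import Mathlib

open Matrix Kronecker
open scoped ComplexOrder

set_option linter.unusedSectionVars false
set_option maxHeartbeats 1000000

/-- `η = exp(2πi/d)`. -/
noncomputable def eta (d : ℕ) : ℂ := Complex.exp (2 * Real.pi * Complex.I / d)

/-- The generalized spin matrix `S_{j,k} = Σ_m η^{jm} |m⟩⟨m+k|`. -/
noncomputable def spinS (d : ℕ) (j k : ZMod d) : Matrix (ZMod d) (ZMod d) ℂ :=
  Matrix.of fun m n => if n = m + k then eta d ^ (j.val * m.val) else 0

/-- `P_{j,k}(r) = (1/d) Σ_{m=0}^{d−1} η^{mr} (S_{j,k})^m`. -/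
noncomputable def spinP (d : ℕ) [NeZero d] (j k r : ZMod d) : Matrix (ZMod d) (ZMod d) ℂ :=
  (d : ℂ)⁻¹ • ∑ m : Fin d, eta d ^ (m.val * r.val) • spinS d j k ^ (m : ℕ)

/-- The coefficient `C(a,m)` determined by
`d² C(a,m) = Σ_{k=1}^{d−1} Σ_{n1,n2} η^{−(k(k−1)/2)(a1+a2) − k(m1+m2) − k(a1 n1 + a2 n2)}
ρ_{n1 n2, (n1+k)(n2+k)}`. -/
noncomputable def Ccoef (d : ℕ) [NeZero d]
    (ρ : Matrix (ZMod d × ZMod d) (ZMod d × ZMod d) ℂ)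
    (a m : ZMod d × ZMod d) : ℂ :=
  ((d : ℂ) ^ 2)⁻¹ *
    ∑ k ∈ Finset.Icc 1 (d - 1), ∑ n1 : ZMod d, ∑ n2 : ZMod d,
      eta d ^ (-(((k : ℤ) * ((k : ℤ) - 1) / 2) * ((a.1.val : ℤ) + (a.2.val : ℤ))
          + (k : ℤ) * ((m.1.val : ℤ) + (m.2.val : ℤ))
          + (k : ℤ) * ((a.1.val : ℤ) * (n1.val : ℤ) + (a.2.val : ℤ) * (n2.val : ℤ))))
        * ρ (n1, n2) (n1 + (k : ZMod d), n2 + (k : ZMod d))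

section Eta
variable (d : ℕ) [NeZero d]

lemma eta_prim : IsPrimitiveRoot (eta d) d := Complex.isPrimitiveRoot_exp d (NeZero.ne d)

lemma eta_ne_zero : eta d ≠ 0 := Complex.exp_ne_zero _

lemma eta_zpow_one_iff (c : ℤ) : eta d ^ c = 1 ↔ ((c : ZMod d) = 0) := by
  rw [(eta_prim d).zpow_eq_one_iff_dvd, ← ZMod.intCast_zmod_eq_zero_iff_dvd]

lemma eta_congr {x y : ℤ} (h : ((x : ZMod d) = (y : ZMod d))) : eta d ^ x = eta d ^ y := by
  have h1 : eta d ^ (x - y) = 1 := by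
    rw [eta_zpow_one_iff]; push_cast; rw [h]; ring
  calc eta d ^ x = eta d ^ (y + (x - y)) := by ring_nf
    _ = eta d ^ y * eta d ^ (x - y) := zpow_add₀ (eta_ne_zero d) _ _
    _ = eta d ^ y := by rw [h1, mul_one]

lemma eta_conj : (starRingEnd ℂ) (eta d) = (eta d)⁻¹ := by
  rw [eta, ← Complex.exp_conj, ← Complex.exp_neg]
  congr 1
  rw [map_div₀, _root_.map_mul, _root_.map_mul, Complex.conj_I]
  simp [Complex.conj_natCast, map_ofNat]
  ring

lemma eta_zpow_conj (x : ℤ) : (starRingEnd ℂ) (eta d ^ x) = eta d ^ (-x) := by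
  rw [map_zpow₀, eta_conj, _root_.inv_zpow, ← _root_.zpow_neg]

lemma eta_add (x y : ℤ) : eta d ^ (x + y) = eta d ^ x * eta d ^ y :=
  zpow_add₀ (eta_ne_zero d) _ _

lemma sum_eta (c : ℤ) :
    ∑ x : ZMod d, eta d ^ ((x.val : ℤ) * c) = if ((c : ZMod d) = 0) then (d : ℂ) else 0 := by
  by_cases h : ((c : ZMod d) = 0)
  · have h1 : ∀ x : ZMod d, eta d ^ ((x.val : ℤ) * c) = 1 := by
      intro x
      rw [eta_zpow_one_iff]; push_cast; rw [h]; ring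
    rw [Finset.sum_congr rfl (fun x _ => h1 x), if_pos h]
    simp [Finset.card_univ, ZMod.card]
  · have hx : ∀ x : ZMod d, eta d ^ ((x.val : ℤ) * c) = (eta d ^ c) ^ (x.val) := by
      intro x
      rw [← zpow_natCast (eta d ^ c), ← _root_.zpow_mul]; ring_nf
    rw [Finset.sum_congr rfl (fun x _ => hx x)]
    have hre : ∑ x : ZMod d, (eta d ^ c) ^ (x.val) = ∑ i ∈ Finset.range d, (eta d ^ c) ^ i := by
      exact Finset.sum_nbij' (f := fun x : ZMod d => (eta d ^ c) ^ (x.val))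
        (g := fun i => (eta d ^ c) ^ i) (fun x => x.val) (fun i => (i : ZMod d))
        (fun x _ => Finset.mem_range.mpr (ZMod.val_lt x))
        (fun i _ => Finset.mem_univ _)
        (fun x _ => ZMod.natCast_rightInverse x)
        (fun i hi => ZMod.val_cast_of_lt (Finset.mem_range.mp hi))
        (fun x _ => rfl)
    rw [hre, geom_sum_eq (fun h1 => h (by rwa [eta_zpow_one_iff] at h1))]
    have h2 : (eta d ^ c) ^ d = 1 := by
      rw [← zpow_natCast, ← _root_.zpow_mul, mul_comm, _root_.zpow_mul, zpow_natCast,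
        (eta_prim d).pow_eq_one, _root_.one_zpow]
    rw [h2, sub_self, zero_div, if_neg h]

end Eta

section Extra
variable (d : ℕ) [NeZero d]
lemma two_ne_zero_zmod (hd : d.Prime) (hodd : Odd d) : (2 : ZMod d) ≠ 0 := by
  intro h
  have h2 : ((2 : ℕ) : ZMod d) = 0 := by push_cast; exact h
  have hdvd : d ∣ 2 := (ZMod.natCast_eq_zero_iff 2 d).mp h2
  have h3 := Nat.le_of_dvd (by norm_num) hdvd
  have h4 := hd.two_le
  interval_cases d
  exact absurd hodd (by decide)

lemma half_spec (x : ℤ) : 2 * (x * (x - 1) / 2) = x * (x - 1) := by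
  apply Int.mul_ediv_cancel'
  rcases Int.even_mul_succ_self (x - 1) with ⟨k, hk⟩
  exact ⟨k, by linarith⟩

lemma half_zmod (x : ℤ) :
    (2 : ZMod d) * (((x * (x - 1) / 2 : ℤ) : ZMod d)) = (x : ZMod d) * ((x : ZMod d) - 1) := by
  have := congrArg (Int.cast : ℤ → ZMod d) (half_spec x)
  push_cast at this
  exact this

end Extra

section Spin
variable (d : ℕ) [NeZero d]

lemma spinS_apply' (a m n : ZMod d) :
    spinS d a 1 m n = if n = m + 1 then eta d ^ ((a.val : ℤ) * (m.val : ℤ)) else 0 := by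
  rw [spinS]
  simp only [Matrix.of_apply]
  by_cases h : n = m + 1
  · rw [if_pos h, if_pos h, ← zpow_natCast]
    congr 1
    try push_cast
    try ring
  · rw [if_neg h, if_neg h]

lemma spinS_pow (hd : d.Prime) (hodd : Odd d) (a : ZMod d) (t : ℕ) (j l : ZMod d) :
    (spinS d a 1 ^ t) j l =
      if l = j + (t : ZMod d) then
        eta d ^ ((a.val : ℤ) * ((t : ℤ) * (j.val : ℤ) + (t : ℤ) * ((t : ℤ) - 1) / 2)) else 0 := by
  haveI : Fact d.Prime := ⟨hd⟩
  have h2 : (2 : ZMod d) ≠ 0 := two_ne_zero_zmod d hd hodd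
  induction t generalizing l with
  | zero =>
      simp only [pow_zero, Matrix.one_apply, Nat.cast_zero, add_zero, CharP.cast_eq_zero]
      norm_num [eq_comm]
  | succ t ih =>
      rw [pow_succ, Matrix.mul_apply, Finset.sum_eq_single (j + (t : ZMod d))
        (fun p _ hp => by rw [ih, if_neg hp, zero_mul])
        (fun h => absurd (Finset.mem_univ _) h)]
      rw [ih, if_pos rfl, spinS_apply']
      have hcond : (((t + 1 : ℕ) : ZMod d)) = (t : ZMod d) + 1 := by push_cast; ring
      by_cases hl : l = j + ((t : ZMod d) + 1)
      · rw [if_pos (by rw [hl, ← add_assoc]), if_pos (by rw [hl, hcond]), ← eta_add]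
        apply eta_congr
        apply mul_left_cancel₀ h2
        have e1 := half_zmod d (t : ℤ)
        have e2 := half_zmod d ((t : ℤ) + 1)
        push_cast [ZMod.natCast_val, ZMod.cast_id] at e1 e2 ⊢
        linear_combination ((a : ZMod d)) * e1 - ((a : ZMod d)) * e2
      · rw [if_neg (fun h => hl (by rw [h, ← add_assoc])), mul_zero,
          if_neg (fun h => hl (by rw [h, hcond]))]

def pent (d : ℕ) [NeZero d] (a r n : ZMod d) : ℤ :=
  (n.val : ℤ) * (r.val : ℤ) + (a.val : ℤ) * ((n.val : ℤ) * ((n.val : ℤ) - 1) / 2)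

lemma spinP_apply (hd : d.Prime) (hodd : Odd d) (a r j l : ZMod d) :
    spinP d a 1 r j l = (d : ℂ)⁻¹ * eta d ^ (pent d a r l - pent d a r j) := by
  haveI : Fact d.Prime := ⟨hd⟩
  have h2 : (2 : ZMod d) ≠ 0 := two_ne_zero_zmod d hd hodd
  rw [spinP, Matrix.smul_apply, Matrix.sum_apply]
  simp only [Matrix.smul_apply, smul_eq_mul, spinS_pow d hd hodd a]
  rw [Fintype.sum_eq_single (⟨(l - j).val, ZMod.val_lt _⟩ : Fin d) (fun x hx => by
    rw [if_neg, mul_zero]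
    intro hcond
    apply hx
    have h5 : ((x : ℕ) : ZMod d) = l - j := by rw [hcond]; ring
    apply Fin.ext
    rw [← ZMod.val_cast_of_lt x.isLt, h5])]
  rw [if_pos (by rw [ZMod.natCast_val, ZMod.cast_id]; ring)]
  rw [← zpow_natCast (eta d), ← eta_add]
  congr 1
  apply eta_congr
  apply mul_left_cancel₀ h2
  have e1 := half_zmod d ((l - j).val : ℤ)
  have e2 := half_zmod d ((l.val : ℤ))
  have e3 := half_zmod d ((j.val : ℤ))
  rw [pent, pent]
  push_cast [Fin.val_mk, ZMod.natCast_val, ZMod.cast_id] at e1 e2 e3 ⊢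
  linear_combination ((a : ZMod d)) * e1 - ((a : ZMod d)) * e2 + ((a : ZMod d)) * e3
end Spin

section Proj
variable (d : ℕ) [NeZero d]

lemma hdC (d : ℕ) [NeZero d] : (d : ℂ) ≠ 0 := Nat.cast_ne_zero.mpr (NeZero.ne d)

lemma spinP_idem (hd : d.Prime) (hodd : Odd d) (a r : ZMod d) : spinP d a 1 r * spinP d a 1 r = spinP d a 1 r := by
  ext j l
  rw [Matrix.mul_apply]
  simp only [spinP_apply d hd hodd]
  have h1 : ∀ p : ZMod d, ((d : ℂ)⁻¹ * eta d ^ (pent d a r p - pent d a r j)) *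
      ((d : ℂ)⁻¹ * eta d ^ (pent d a r l - pent d a r p)) =
      (d : ℂ)⁻¹ * ((d : ℂ)⁻¹ * eta d ^ (pent d a r l - pent d a r j)) := by
    intro p
    rw [mul_mul_mul_comm, ← eta_add,
      show pent d a r p - pent d a r j + (pent d a r l - pent d a r p)
        = pent d a r l - pent d a r j by ring, mul_assoc]
  rw [Finset.sum_congr rfl fun p _ => h1 p, Finset.sum_const, Finset.card_univ, ZMod.card,
    nsmul_eq_mul, ← mul_assoc, mul_inv_cancel₀ (hdC d), one_mul]

lemma spinP_herm (hd : d.Prime) (hodd : Odd d) (a r : ZMod d) : (spinP d a 1 r).IsHermitian := by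
  show _ᴴ = _
  ext j l
  rw [Matrix.conjTranspose_apply, spinP_apply d hd hodd, spinP_apply d hd hodd,
    RCLike.star_def, _root_.map_mul, map_inv₀, map_natCast, eta_zpow_conj, neg_sub]

lemma spinP_rank (hd : d.Prime) (hodd : Odd d) (a r : ZMod d) : (spinP d a 1 r).rank = 1 := by
  classical
  have hP : spinP d a 1 r = Matrix.vecMulVec (fun j => (d : ℂ)⁻¹ * eta d ^ (-(pent d a r j)))
      (fun l => eta d ^ (pent d a r l)) := by
    ext j l
    rw [Matrix.vecMulVec_apply, spinP_apply d hd hodd, mul_assoc, ← eta_add]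
    congr 2
    ring
  have hu : (fun j => (d : ℂ)⁻¹ * eta d ^ (-(pent d a r j))) ≠ 0 := by
    intro h
    have := congrFun h 0
    simp only [Pi.zero_apply] at this
    exact (mul_ne_zero (inv_ne_zero (hdC d)) (zpow_ne_zero _ (eta_ne_zero d))) this
  rw [hP, Matrix.rank]
  have hrange : LinearMap.range (Matrix.vecMulVec (fun j => (d : ℂ)⁻¹ * eta d ^ (-(pent d a r j)))
      (fun l => eta d ^ (pent d a r l))).mulVecLin
      = Submodule.span ℂ {(fun j => (d : ℂ)⁻¹ * eta d ^ (-(pent d a r j)))} := by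
    apply le_antisymm
    · rintro y ⟨x, rfl⟩
      rw [Matrix.mulVecLin_apply]
      have hmv : Matrix.vecMulVec (fun j => (d : ℂ)⁻¹ * eta d ^ (-(pent d a r j)))
          (fun l => eta d ^ (pent d a r l)) *ᵥ x
          = ((fun l => eta d ^ (pent d a r l)) ⬝ᵥ x) • (fun j => (d : ℂ)⁻¹ * eta d ^ (-(pent d a r j))) := by
        ext i
        simp only [Matrix.mulVec, Matrix.vecMulVec_apply, dotProduct, Pi.smul_apply,
          smul_eq_mul, Finset.sum_mul, Finset.mul_sum]
        exact Finset.sum_congr rfl fun p _ => by ring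
      rw [hmv]
      exact Submodule.smul_mem _ _ (Submodule.mem_span_singleton_self _)
    · rw [Submodule.span_le, Set.singleton_subset_iff]
      refine ⟨fun p => if p = 0 then (eta d ^ (pent d a r 0))⁻¹ else 0, ?_⟩
      rw [Matrix.mulVecLin_apply]
      ext i
      rw [Matrix.mulVec, dotProduct, Finset.sum_eq_single 0
        (fun p _ hp => by rw [if_neg hp, mul_zero]) (fun h => absurd (Finset.mem_univ _) h)]
      rw [if_pos rfl, Matrix.vecMulVec_apply, mul_assoc,
        mul_inv_cancel₀ (zpow_ne_zero _ (eta_ne_zero d)), mul_one]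
  rw [hrange]
  exact finrank_span_singleton hu
end Proj

section Real
variable (d : ℕ) [NeZero d]

lemma Ccoef_conj (hd : d.Prime) (hodd : Odd d)
    (ρ : Matrix (ZMod d × ZMod d) (ZMod d × ZMod d) ℂ) (hherm : ρ.IsHermitian)
    (a m : ZMod d × ZMod d) :
    (starRingEnd ℂ) (Ccoef d ρ a m) = Ccoef d ρ a m := by
  obtain ⟨a1, a2⟩ := a
  obtain ⟨m1, m2⟩ := m
  haveI : Fact d.Prime := ⟨hd⟩
  have h2 : (2 : ZMod d) ≠ 0 := two_ne_zero_zmod d hd hodd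
  have hρc : ∀ x y, (starRingEnd ℂ) (ρ x y) = ρ y x := by
    intro x y
    have h := Matrix.conjTranspose_apply ρ x y
    rw [hherm] at h
    rw [RCLike.star_def] at h
    exact h.symm
  simp only [Ccoef]
  rw [_root_.map_mul, map_inv₀, map_pow, map_natCast, map_sum]
  congr 1
  simp only [map_sum, _root_.map_mul, eta_zpow_conj, neg_neg, hρc]
  refine Finset.sum_nbij' (fun k => d - k) (fun k => d - k) ?_ ?_ ?_ ?_ ?_
  · intro k hk
    have := hd.two_le
    simp only [Finset.mem_Icc] at *
    omega
  · intro k hk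
    have := hd.two_le
    simp only [Finset.mem_Icc] at *
    omega
  · intro k hk
    have := hd.two_le
    simp only [Finset.mem_Icc] at *
    omega
  · intro k hk
    have := hd.two_le
    simp only [Finset.mem_Icc] at *
    omega
  · intro k hk
    have hk1 := Finset.mem_Icc.mp hk
    have hd2 := hd.two_le
    have hkle : k ≤ d := by omega
    refine Fintype.sum_equiv (Equiv.addRight ((k : ℕ) : ZMod d)) _ _ fun n1 => ?_
    refine Fintype.sum_equiv (Equiv.addRight ((k : ℕ) : ZMod d)) _ _ fun n2 => ?_
    simp only [Equiv.coe_addRight]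
    have hkk : ((d - k : ℕ) : ZMod d) = -((k : ℕ) : ZMod d) := by
      push_cast [Nat.cast_sub hkle]
      simp [ZMod.natCast_self]
    have harg : ∀ n : ZMod d, n + (k : ZMod d) + ((d - k : ℕ) : ZMod d) = n := by
      intro n; rw [hkk]; ring
    rw [harg, harg]
    congr 1
    apply eta_congr d
    apply mul_left_cancel₀ h2
    have e1 := half_zmod d (k : ℤ)
    have e2 := half_zmod d ((d - k : ℕ) : ℤ)
    push_cast [ZMod.natCast_val, ZMod.cast_id, Nat.cast_sub hkle, ZMod.natCast_self] at e1 e2 ⊢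
    linear_combination ((a1 : ZMod d) + (a2 : ZMod d)) * e1 + ((a1 : ZMod d) + (a2 : ZMod d)) * e2
end Real

section Key
variable (d : ℕ) [NeZero d]

lemma quad_sum (z : ℂ) (w1 w2 c1 c2 : ℤ) :
    (∑ a1 : ZMod d, ∑ a2 : ZMod d, ∑ m1 : ZMod d, ∑ m2 : ZMod d,
      z * eta d ^ ((a1.val : ℤ) * w1 + ((a2.val : ℤ) * w2 + ((m1.val : ℤ) * c1 + (m2.val : ℤ) * c2))))
    = z * ((if ((w1 : ZMod d) = 0) then (d : ℂ) else 0) * ((if ((w2 : ZMod d) = 0) then (d : ℂ) else 0)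
        * ((if ((c1 : ZMod d) = 0) then (d : ℂ) else 0) * (if ((c2 : ZMod d) = 0) then (d : ℂ) else 0)))) := by
  simp only [eta_add]
  simp only [← Finset.mul_sum, ← Finset.sum_mul, sum_eta]
  try ring

lemma shuffle (v q1 q2 : ℂ) (E D1 D2 X : ℤ) (h : -E + (D1 + D2) = X) :
    q1 * (eta d ^ (-E) * v) * (q2 * eta d ^ D1 * (q2 * eta d ^ D2)) =
    q1 * (q2 * q2) * v * eta d ^ X := by
  rw [← h, eta_add, eta_add]; ring

lemma key_entry (hd : d.Prime) (hodd : Odd d)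
    (ρ : Matrix (ZMod d × ZMod d) (ZMod d × ZMod d) ℂ) (j1 j2 l1 l2 : ZMod d) :
    (∑ a1 : ZMod d, ∑ a2 : ZMod d, ∑ m1 : ZMod d, ∑ m2 : ZMod d,
      Ccoef d ρ (a1, a2) (m1, m2) * (spinP d a1 1 m1 j1 l1 * spinP d a2 1 m2 j2 l2))
    = if l1 - j1 = l2 - j2 ∧ j1 ≠ l1 then ρ (j1, j2) (l1, l2) else 0 := by
  have step1 : (∑ a1 : ZMod d, ∑ a2 : ZMod d, ∑ m1 : ZMod d, ∑ m2 : ZMod d,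
      Ccoef d ρ (a1, a2) (m1, m2) * (spinP d a1 1 m1 j1 l1 * spinP d a2 1 m2 j2 l2))
      = ∑ a1 : ZMod d, ∑ a2 : ZMod d, ∑ m1 : ZMod d, ∑ m2 : ZMod d,
        ∑ k ∈ Finset.Icc 1 (d - 1), ∑ n1 : ZMod d, ∑ n2 : ZMod d,
        (((d : ℂ) ^ 2)⁻¹ * ((d : ℂ)⁻¹ * (d : ℂ)⁻¹) * ρ (n1, n2) (n1 + (k : ZMod d), n2 + (k : ZMod d))) *
          eta d ^ ((a1.val : ℤ) * ((l1.val : ℤ) * ((l1.val : ℤ) - 1) / 2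
              - (j1.val : ℤ) * ((j1.val : ℤ) - 1) / 2
              - (k : ℤ) * ((k : ℤ) - 1) / 2 - (k : ℤ) * (n1.val : ℤ))
            + ((a2.val : ℤ) * ((l2.val : ℤ) * ((l2.val : ℤ) - 1) / 2
              - (j2.val : ℤ) * ((j2.val : ℤ) - 1) / 2
              - (k : ℤ) * ((k : ℤ) - 1) / 2 - (k : ℤ) * (n2.val : ℤ))
            + ((m1.val : ℤ) * ((l1.val : ℤ) - (j1.val : ℤ) - (k : ℤ))
            + (m2.val : ℤ) * ((l2.val : ℤ) - (j2.val : ℤ) - (k : ℤ))))) := by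
    refine Finset.sum_congr rfl fun a1 _ => Finset.sum_congr rfl fun a2 _ =>
      Finset.sum_congr rfl fun m1 _ => Finset.sum_congr rfl fun m2 _ => ?_
    rw [Ccoef, spinP_apply d hd hodd, spinP_apply d hd hodd]
    simp only [pent]
    simp only [Finset.mul_sum, Finset.sum_mul]
    refine Finset.sum_congr rfl fun k hk => Finset.sum_congr rfl fun n1 _ =>
      Finset.sum_congr rfl fun n2 _ => ?_
    exact shuffle d _ _ _ _ _ _ _ (by ring)
  rw [step1]
  conv_lhs => enter [2,a1,2,a2,2,m1]; rw [Finset.sum_comm]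
  conv_lhs => enter [2,a1,2,a2,2,m1,2,k]; rw [Finset.sum_comm]
  conv_lhs => enter [2,a1,2,a2,2,m1,2,k,2,n1]; rw [Finset.sum_comm]
  conv_lhs => enter [2,a1,2,a2]; rw [Finset.sum_comm]
  conv_lhs => enter [2,a1,2,a2,2,k]; rw [Finset.sum_comm]
  conv_lhs => enter [2,a1,2,a2,2,k,2,n1]; rw [Finset.sum_comm]
  conv_lhs => enter [2,a1]; rw [Finset.sum_comm]
  conv_lhs => enter [2,a1,2,k]; rw [Finset.sum_comm]
  conv_lhs => enter [2,a1,2,k,2,n1]; rw [Finset.sum_comm]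
  conv_lhs => rw [Finset.sum_comm]
  conv_lhs => enter [2,k]; rw [Finset.sum_comm]
  conv_lhs => enter [2,k,2,n1]; rw [Finset.sum_comm]
  conv_lhs => enter [2,k,2,n1,2,n2]; rw [quad_sum]
  haveI : Fact d.Prime := ⟨hd⟩
  have h2 : (2 : ZMod d) ≠ 0 := two_ne_zero_zmod d hd hodd
  have hdC : (d : ℂ) ≠ 0 := Nat.cast_ne_zero.mpr (NeZero.ne d)
  have hd2 : 2 ≤ d := hd.two_le
  by_cases hcase : l1 - j1 = l2 - j2 ∧ j1 ≠ l1
  · obtain ⟨hc, hne⟩ := hcase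
    rw [if_pos ⟨hc, hne⟩]
    have hcne : l1 - j1 ≠ 0 := sub_ne_zero.mpr (Ne.symm hne)
    have hk0c : (((l1 - j1).val : ℕ) : ZMod d) = l1 - j1 := ZMod.natCast_rightInverse _
    have hk0ne : (l1 - j1).val ≠ 0 := fun h => hcne (by rwa [ZMod.val_eq_zero] at h)
    have hk0lt : (l1 - j1).val < d := ZMod.val_lt _
    have hk0mem : (l1 - j1).val ∈ Finset.Icc 1 (d - 1) := Finset.mem_Icc.mpr ⟨by omega, by omega⟩
    have hwgen : ∀ n1 : ZMod d, (((l1.val : ℤ) * ((l1.val : ℤ) - 1) / 2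
        - (j1.val : ℤ) * ((j1.val : ℤ) - 1) / 2
        - ((l1 - j1).val : ℤ) * (((l1 - j1).val : ℤ) - 1) / 2
        - ((l1 - j1).val : ℤ) * (n1.val : ℤ) : ℤ) : ZMod d) = (l1 - j1) * (j1 - n1) := by
      intro n1
      apply mul_left_cancel₀ h2
      have e1 := half_zmod d (l1.val : ℤ)
      have e2 := half_zmod d (j1.val : ℤ)
      have e3 := half_zmod d ((l1 - j1).val : ℤ)
      push_cast [ZMod.natCast_val, ZMod.cast_id] at e1 e2 e3 ⊢
      linear_combination e1 - e2 - e3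
    have hw2gen : ∀ n2 : ZMod d, (((l2.val : ℤ) * ((l2.val : ℤ) - 1) / 2
        - (j2.val : ℤ) * ((j2.val : ℤ) - 1) / 2
        - ((l1 - j1).val : ℤ) * (((l1 - j1).val : ℤ) - 1) / 2
        - ((l1 - j1).val : ℤ) * (n2.val : ℤ) : ℤ) : ZMod d) = (l1 - j1) * (j2 - n2) := by
      intro n2
      apply mul_left_cancel₀ h2
      have e1 := half_zmod d (l2.val : ℤ)
      have e2 := half_zmod d (j2.val : ℤ)
      have e3 := half_zmod d ((l1 - j1).val : ℤ)
      push_cast [ZMod.natCast_val, ZMod.cast_id] at e1 e2 e3 ⊢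
      linear_combination e1 - e2 - e3 + (1 - 2*(j2 : ZMod d) - (l1 - j1) - (l2 - j2)) * hc
    rw [Finset.sum_eq_single ((l1 - j1).val) ?_ (fun h => absurd hk0mem h)]
    swap
    · intro k hk hkne
      refine Finset.sum_eq_zero fun n1 _ => Finset.sum_eq_zero fun n2 _ => ?_
      have hkd : k < d := by have := (Finset.mem_Icc.mp hk).2; omega
      have hcnd : ¬((((l1.val : ℤ) - (j1.val : ℤ) - (k : ℤ) : ℤ) : ZMod d) = 0) := by
        intro h
        push_cast [ZMod.natCast_val, ZMod.cast_id] at h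
        apply hkne
        have hcast : ((k : ℕ) : ZMod d) = l1 - j1 := by linear_combination -h
        calc k = ((k : ZMod d)).val := (ZMod.val_cast_of_lt hkd).symm
          _ = (l1 - j1).val := by rw [hcast]
      rw [if_neg hcnd]
      simp
    rw [Finset.sum_eq_single j1 ?_ (fun h => absurd (Finset.mem_univ _) h)]
    swap
    · intro n1 _ hn1
      refine Finset.sum_eq_zero fun n2 _ => ?_
      rw [hwgen n1, if_neg (mul_ne_zero hcne (sub_ne_zero.mpr (Ne.symm hn1)))]
      simp
    rw [Finset.sum_eq_single j2 ?_ (fun h => absurd (Finset.mem_univ _) h)]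
    swap
    · intro n2 _ hn2
      rw [hw2gen n2, if_neg (mul_ne_zero hcne (sub_ne_zero.mpr (Ne.symm hn2)))]
      simp
    rw [hwgen j1, hw2gen j2]
    have hv3 : ((((l1.val : ℤ) - (j1.val : ℤ) - (((l1 - j1).val : ℕ) : ℤ) : ℤ)) : ZMod d) = 0 := by
      push_cast [ZMod.natCast_val, ZMod.cast_id]; ring
    have hv4 : ((((l2.val : ℤ) - (j2.val : ℤ) - (((l1 - j1).val : ℕ) : ℤ) : ℤ)) : ZMod d) = 0 := by
      push_cast [ZMod.natCast_val, ZMod.cast_id]; linear_combination -hc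
    rw [hv3, hv4]
    have harg1 : j1 + (((l1 - j1).val : ℕ) : ZMod d) = l1 := by rw [hk0c]; ring
    have harg2 : j2 + (((l1 - j1).val : ℕ) : ZMod d) = l2 := by rw [hk0c]; linear_combination hc
    rw [harg1, harg2]
    simp only [sub_self, mul_zero, if_pos rfl]
    field_simp
    rw [if_pos trivial]; ring
  · rw [if_neg hcase]
    refine Finset.sum_eq_zero fun k hk => Finset.sum_eq_zero fun n1 _ =>
      Finset.sum_eq_zero fun n2 _ => ?_
    have hkd : k < d := by have := (Finset.mem_Icc.mp hk).2; have := hd.two_le; omega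
    have hk1 : 1 ≤ k := (Finset.mem_Icc.mp hk).1
    by_cases h3 : ((((l1.val : ℤ) - (j1.val : ℤ) - (k : ℤ) : ℤ) : ZMod d) = 0)
    · by_cases h4 : ((((l2.val : ℤ) - (j2.val : ℤ) - (k : ℤ) : ℤ) : ZMod d) = 0)
      · exfalso
        push_cast [ZMod.natCast_val, ZMod.cast_id] at h3 h4
        apply hcase
        constructor
        · linear_combination h3 - h4
        · intro hj
          have hkz : ((k : ℕ) : ZMod d) = 0 := by rw [hj] at h3; linear_combination -h3
          have : k = 0 := by
            have := ZMod.val_cast_of_lt hkd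
            rw [hkz, ZMod.val_zero] at this
            omega
          omega
      · rw [if_neg h4]; simp
    · rw [if_neg h3]; simp
end Key

/-- For `d` an odd prime and `ρ` a bipartite density supported
in `M`, every `C(a,m)` is real, each `P_{a,1}(m)` is a rank-one projection, and
`ρ − ρ_D = Σ_{a1,a2} Σ_{m1,m2} C(a,m) P_{a1,1}(m1) ⊗ P_{a2,1}(m2)`. -/
theorem structural_decomposition (d : ℕ) [NeZero d] (hd : d.Prime) (hodd : Odd d)
    (ρ : Matrix (ZMod d × ZMod d) (ZMod d × ZMod d) ℂ)
    (hρ : ρ.PosSemidef ∧ ρ.trace = 1)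
    (hsupp : ∀ j1 j2 k1 k2 : ZMod d, j2 - j1 ≠ k2 - k1 → ρ (j1, j2) (k1, k2) = 0) :
    (∀ a m : ZMod d × ZMod d, ∃ c : ℝ, Ccoef d ρ a m = (c : ℂ)) ∧
    (∀ a m : ZMod d,
        spinP d a 1 m * spinP d a 1 m = spinP d a 1 m ∧
        (spinP d a 1 m).IsHermitian ∧ (spinP d a 1 m).rank = 1) ∧
    (ρ - Matrix.diagonal ρ.diag
      = ∑ a1 : ZMod d, ∑ a2 : ZMod d, ∑ m1 : ZMod d, ∑ m2 : ZMod d,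
          Ccoef d ρ (a1, a2) (m1, m2) • (spinP d a1 1 m1 ⊗ₖ spinP d a2 1 m2)) := by
  obtain ⟨hpsd, -⟩ := hρ
  refine ⟨?_, ?_, ?_⟩
  · intro a m
    exact ⟨(Ccoef d ρ a m).re,
      (Complex.conj_eq_iff_re.mp (Ccoef_conj d hd hodd ρ hpsd.1 a m)).symm⟩
  · intro a m
    exact ⟨spinP_idem d hd hodd a m, spinP_herm d hd hodd a m, spinP_rank d hd hodd a m⟩
  · ext ⟨j1, j2⟩ ⟨l1, l2⟩
    rw [Matrix.sub_apply, Matrix.diagonal_apply]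
    simp only [Matrix.sum_apply, Matrix.smul_apply, smul_eq_mul, Matrix.kroneckerMap_apply]
    rw [key_entry d hd hodd ρ j1 j2 l1 l2]
    by_cases hdg : ((j1, j2) : ZMod d × ZMod d) = (l1, l2)
    · have h1 : j1 = l1 := (Prod.ext_iff.mp hdg).1
      rw [if_pos hdg]
      have hno : ¬(l1 - j1 = l2 - j2 ∧ j1 ≠ l1) := fun h => h.2 h1
      rw [if_neg hno, Matrix.diag]
      rw [hdg, sub_self]
    · rw [if_neg hdg]
      by_cases hcond : l1 - j1 = l2 - j2 ∧ j1 ≠ l1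
      · rw [if_pos hcond, sub_zero]
      · rw [if_neg hcond, sub_zero]
        push_neg at hcond
        by_cases hc : l1 - j1 = l2 - j2
        · have hj : j1 = l1 := hcond hc
          exfalso
          apply hdg
          have h0 : l2 - j2 = 0 := by rw [← hc, hj, sub_self]
          have h2 : j2 = l2 := (sub_eq_zero.mp h0).symm
          rw [hj, h2]
        · exact hsupp j1 j2 l1 l2 (fun h => hc (by linear_combination h))
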